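/- Let g ∈ ℓ², s₁ ≥ 0, s₂ ≤ 0, α > 0 and β > 0. Then the decomposition functional I(u,v) := ½|u|_{s₁}² + (α/2)‖u + v − g‖² + (β/2)|v|_{s₂}² has a unique minimizer (u,v) among pairs of sequences u, v ∈ ℓ² with |u|_{s₁} < ∞, and this minimizer is given explicitly by v_k = α g_k / (αβ|k|^{2(s₂−s₁)} + α + β|k|^{2s₂}) and u_k = (β|k|^{2s₂}/|k|^{2s₁}) v_k = αβ|k|^{2(s₂−s₁)} g_k / (αβ|k|^{2(s₂−s₁)} + α + β|k|^{2s₂}) for all k ∈ ℤ^d ∖ {0}. -/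

import Mathlib

open scoped BigOperators
open Filter

noncomputable section

/-- Index set `ℤ^d \ {0}` of nonzero frequencies. -/
abbrev K (d : ℕ) : Type := {k : Fin d → ℤ // k ≠ 0}

/-- Euclidean norm `|k|` of a frequency `k ∈ ℤ^d \ {0}`. -/
noncomputable def nrm {d : ℕ} (k : K d) : ℝ := Real.sqrt (∑ i : Fin d, ((k.1 i : ℝ)) ^ 2)

/-- Squared fractional Sobolev seminorm `|u|_s² = Σ_k |k|^{2s} |u_k|²`. -/
noncomputable def HnormSq {d : ℕ} (s : ℝ) (u : K d → ℂ) : ℝ :=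
  ∑' k : K d, nrm k ^ (2 * s) * ‖u k‖ ^ 2

/-- `u ∈ ℓ²`, i.e. `‖u‖ = |u|_0 < ∞`. -/
def MemL2 {d : ℕ} (u : K d → ℂ) : Prop := Summable fun k : K d => ‖u k‖ ^ 2

/-- `|u|_s < ∞`. -/
def MemHs {d : ℕ} (s : ℝ) (u : K d → ℂ) : Prop :=
  Summable fun k : K d => nrm k ^ (2 * s) * ‖u k‖ ^ 2

/-- The basic quadratic completion-of-the-square identity at a single frequency. -/
lemma quad_key (a b al be D : ℝ) (ha : 0 < a) (hal : 0 < al) (hbe : 0 < be) (hb : 0 < b)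
    (hD : D = al*be*(b/a) + al + be*b) (g u v U V : ℂ)
    (hU : U = ((al*be*(b/a) : ℝ) : ℂ) * g / ((D : ℝ) : ℂ))
    (hV : V = (al : ℂ) * g / ((D : ℝ) : ℂ)) :
    1/2*(a*‖u‖^2) + al/2*‖u+v-g‖^2 + be/2*(b*‖v‖^2)
      = (1/2*(a*‖U‖^2) + al/2*‖U+V-g‖^2 + be/2*(b*‖V‖^2))
      + (1/2*(a*‖u-U‖^2) + al/2*‖(u-U)+(v-V)‖^2 + be/2*(b*‖v-V‖^2)) := by
  have hD0 : 0 < D := by rw [hD]; positivity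
  have hsq : ∀ z : ℂ, ‖z‖^2 = z.re^2 + z.im^2 := by
    intro z
    rw [Complex.sq_norm, Complex.normSq_apply]; ring
  have hU' : U = ((al*be*(b/a)/D : ℝ) : ℂ) * g := by
    rw [hU, Complex.ofReal_div]; ring
  have hV' : V = ((al/D : ℝ) : ℂ) * g := by
    rw [hV, Complex.ofReal_div]; ring
  subst hU' hV'
  simp only [hsq, Complex.add_re, Complex.add_im, Complex.sub_re, Complex.sub_im,
    Complex.mul_re, Complex.mul_im, Complex.ofReal_re, Complex.ofReal_im]
  subst hD
  field_simp
  ring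

lemma nrm_ge_one {d : ℕ} (k : K d) : 1 ≤ nrm k := by
  obtain ⟨i, hi⟩ : ∃ i, k.1 i ≠ 0 := by
    by_contra h; push_neg at h; exact k.2 (funext h)
  have h2 : (1:ℝ) ≤ ((k.1 i : ℝ))^2 := by
    have : (1:ℤ) ≤ (k.1 i)^2 := by rcases hi.lt_or_gt with h | h <;> nlinarith
    exact_mod_cast this
  have hsum : (1:ℝ) ≤ ∑ j : Fin d, ((k.1 j : ℝ))^2 :=
    le_trans h2 (Finset.single_le_sum (f := fun j => ((k.1 j : ℝ))^2)
      (fun j _ => sq_nonneg _) (Finset.mem_univ i))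
  calc (1:ℝ) = Real.sqrt 1 := Real.sqrt_one.symm
    _ ≤ Real.sqrt (∑ j : Fin d, ((k.1 j : ℝ))^2) := Real.sqrt_le_sqrt hsum

set_option maxHeartbeats 1000000 in
/-- the decomposition functional
`I(u,v) = ½|u|_{s₁}² + (α/2)‖u+v−g‖² + (β/2)|v|_{s₂}²` has a unique minimizer among pairs of
`ℓ²` sequences with `|u|_{s₁} < ∞`, given explicitly by the stated formulas. -/
theorem stmt_12 (d : ℕ) (hd : 1 ≤ d) (g : K d → ℂ) (hg : MemL2 g)
    (s₁ s₂ α β : ℝ) (hs₁ : 0 ≤ s₁) (hs₂ : s₂ ≤ 0) (hα : 0 < α) (hβ : 0 < β)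
    (I : (K d → ℂ) → (K d → ℂ) → ℝ)
    (hI : ∀ u v : K d → ℂ, I u v =
      (1 / 2) * HnormSq s₁ u + (α / 2) * (∑' k : K d, ‖u k + v k - g k‖ ^ 2) +
        (β / 2) * HnormSq s₂ v)
    (ustar vstar : K d → ℂ)
    (hv : ∀ k : K d, vstar k = (α : ℂ) * g k /
      ((α * β * nrm k ^ (2 * (s₂ - s₁)) + α + β * nrm k ^ (2 * s₂) : ℝ) : ℂ))
    (hu : ∀ k : K d, ustar k = ((α * β * nrm k ^ (2 * (s₂ - s₁)) : ℝ) : ℂ) * g k /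
      ((α * β * nrm k ^ (2 * (s₂ - s₁)) + α + β * nrm k ^ (2 * s₂) : ℝ) : ℂ)) :
    MemL2 ustar ∧ MemHs s₁ ustar ∧ MemL2 vstar ∧
    (∀ k : K d, ustar k = ((β * nrm k ^ (2 * s₂) / nrm k ^ (2 * s₁) : ℝ) : ℂ) * vstar k) ∧
    (∀ u v : K d → ℂ, MemL2 u → MemHs s₁ u → MemL2 v → I ustar vstar ≤ I u v) ∧
    (∀ u v : K d → ℂ, MemL2 u → MemHs s₁ u → MemL2 v →
      I u v = I ustar vstar → u = ustar ∧ v = vstar) := by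
  have hn1 : ∀ k : K d, 1 ≤ nrm k := nrm_ge_one
  have hn0 : ∀ k : K d, 0 < nrm k := fun k => lt_of_lt_of_le one_pos (hn1 k)
  have hA1 : ∀ k : K d, 1 ≤ nrm k ^ (2 * s₁) := by
    intro k
    have := Real.rpow_le_rpow_of_exponent_le (hn1 k) (by positivity : (0:ℝ) ≤ 2 * s₁)
    simpa [Real.rpow_zero] using this
  have hA0 : ∀ k : K d, 0 < nrm k ^ (2 * s₁) := fun k => lt_of_lt_of_le one_pos (hA1 k)
  have hB0 : ∀ k : K d, 0 < nrm k ^ (2 * s₂) := fun k => Real.rpow_pos_of_pos (hn0 k) _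
  have hB1 : ∀ k : K d, nrm k ^ (2 * s₂) ≤ 1 := by
    intro k
    have := Real.rpow_le_rpow_of_exponent_le (hn1 k) (by nlinarith : 2 * s₂ ≤ (0:ℝ))
    simpa [Real.rpow_zero] using this
  have hBA : ∀ k : K d, nrm k ^ (2 * (s₂ - s₁)) = nrm k ^ (2 * s₂) / nrm k ^ (2 * s₁) := by
    intro k
    rw [show 2 * (s₂ - s₁) = 2 * s₂ - 2 * s₁ by ring, Real.rpow_sub (hn0 k)]
  set W : K d → ℝ := fun k =>
    α * β * (nrm k ^ (2 * s₂) / nrm k ^ (2 * s₁)) + α + β * nrm k ^ (2 * s₂) with hWdef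
  have hWk : ∀ k : K d,
      α * β * (nrm k ^ (2 * s₂) / nrm k ^ (2 * s₁)) + α + β * nrm k ^ (2 * s₂) = W k :=
    fun k => rfl
  have hW0 : ∀ k : K d, 0 < W k := by
    intro k
    have h1 : 0 < nrm k ^ (2 * s₂) / nrm k ^ (2 * s₁) := div_pos (hB0 k) (hA0 k)
    have h2 := hB0 k
    exact add_pos (add_pos (mul_pos (mul_pos hα hβ) h1) hα) (mul_pos hβ h2)
  have hv' : ∀ k : K d, vstar k = (α : ℂ) * g k / ((W k : ℝ) : ℂ) := by
    intro k; rw [hv k, hBA k, hWk k]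
  have hu' : ∀ k : K d, ustar k =
      ((α * β * (nrm k ^ (2 * s₂) / nrm k ^ (2 * s₁)) : ℝ) : ℂ) * g k / ((W k : ℝ) : ℂ) := by
    intro k; rw [hu k, hBA k, hWk k]
  -- norms of the minimizer
  have hvn : ∀ k : K d, ‖vstar k‖ = α / W k * ‖g k‖ := by
    intro k
    rw [hv' k, norm_div, norm_mul, Complex.norm_real, Complex.norm_real,
      Real.norm_eq_abs, Real.norm_eq_abs, abs_of_pos hα, abs_of_pos (hW0 k)]
    ring
  have hun : ∀ k : K d, ‖ustar k‖
      = α * β * (nrm k ^ (2 * s₂) / nrm k ^ (2 * s₁)) / W k * ‖g k‖ := by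
    intro k
    have hnum : 0 < α * β * (nrm k ^ (2 * s₂) / nrm k ^ (2 * s₁)) :=
      mul_pos (mul_pos hα hβ) (div_pos (hB0 k) (hA0 k))
    rw [hu' k, norm_div, norm_mul, Complex.norm_real, Complex.norm_real,
      Real.norm_eq_abs, Real.norm_eq_abs, abs_of_pos hnum, abs_of_pos (hW0 k)]
    ring
  have hcv1 : ∀ k : K d, α / W k ≤ 1 := by
    intro k
    rw [div_le_one (hW0 k)]
    have h1 : 0 < α * β * (nrm k ^ (2 * s₂) / nrm k ^ (2 * s₁)) :=
      mul_pos (mul_pos hα hβ) (div_pos (hB0 k) (hA0 k))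
    have h2 : 0 < β * nrm k ^ (2 * s₂) := mul_pos hβ (hB0 k)
    rw [← hWk k]; linarith
  have hcu1 : ∀ k : K d, α * β * (nrm k ^ (2 * s₂) / nrm k ^ (2 * s₁)) / W k ≤ 1 := by
    intro k
    rw [div_le_one (hW0 k)]
    have h2 : 0 < β * nrm k ^ (2 * s₂) := mul_pos hβ (hB0 k)
    rw [← hWk k]; linarith
  have hcv0 : ∀ k : K d, 0 ≤ α / W k := fun k => div_nonneg hα.le (hW0 k).le
  have hcu0 : ∀ k : K d, 0 ≤ α * β * (nrm k ^ (2 * s₂) / nrm k ^ (2 * s₁)) / W k :=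
    fun k => div_nonneg (mul_nonneg (mul_nonneg hα.le hβ.le)
      (div_nonneg (hB0 k).le (hA0 k).le)) (hW0 k).le
  -- membership of the minimizer
  have hvL2 : MemL2 vstar := by
    refine Summable.of_nonneg_of_le (fun k => sq_nonneg _) (fun k => ?_) hg
    rw [hvn k]
    have h1 := hcv1 k
    have h0 := hcv0 k
    have hc2 : (α / W k) ^ 2 ≤ 1 := by nlinarith
    calc (α / W k * ‖g k‖) ^ 2 = (α / W k) ^ 2 * ‖g k‖ ^ 2 := by ring
      _ ≤ 1 * ‖g k‖ ^ 2 := by nlinarith [sq_nonneg (‖g k‖)]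
      _ = ‖g k‖ ^ 2 := one_mul _
  have huL2 : MemL2 ustar := by
    refine Summable.of_nonneg_of_le (fun k => sq_nonneg _) (fun k => ?_) hg
    rw [hun k]
    have h1 := hcu1 k
    have h0 := hcu0 k
    have hc2 : (α * β * (nrm k ^ (2 * s₂) / nrm k ^ (2 * s₁)) / W k) ^ 2 ≤ 1 := by nlinarith
    calc (α * β * (nrm k ^ (2 * s₂) / nrm k ^ (2 * s₁)) / W k * ‖g k‖) ^ 2
        = (α * β * (nrm k ^ (2 * s₂) / nrm k ^ (2 * s₁)) / W k) ^ 2 * ‖g k‖ ^ 2 := by ring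
      _ ≤ 1 * ‖g k‖ ^ 2 := by nlinarith [sq_nonneg (‖g k‖)]
      _ = ‖g k‖ ^ 2 := one_mul _
  have huHs : MemHs s₁ ustar := by
    refine Summable.of_nonneg_of_le
      (fun k => mul_nonneg (hA0 k).le (sq_nonneg _)) (fun k => ?_) (hg.mul_left β)
    rw [hun k]
    have h1 := hcu1 k
    have h0 := hcu0 k
    have hAc : nrm k ^ (2 * s₁) * (α * β * (nrm k ^ (2 * s₂) / nrm k ^ (2 * s₁)) / W k)
        = α * β * nrm k ^ (2 * s₂) / W k := by
      field_simp
      rw [mul_div_mul_left _ _ (hA0 k).ne']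
    have hAc2 : α * β * nrm k ^ (2 * s₂) / W k ≤ β := by
      rw [div_le_iff₀ (hW0 k)]
      have h3 : 0 < α * β * (nrm k ^ (2 * s₂) / nrm k ^ (2 * s₁)) :=
        mul_pos (mul_pos hα hβ) (div_pos (hB0 k) (hA0 k))
      have h4 : α * nrm k ^ (2 * s₂) ≤ α := by nlinarith [hB1 k, hB0 k]
      have h5 : 0 < β * nrm k ^ (2 * s₂) := mul_pos hβ (hB0 k)
      rw [← hWk k]; nlinarith
    have hEnn : 0 ≤ α * β * nrm k ^ (2 * s₂) / W k :=
      div_nonneg (mul_nonneg (mul_nonneg hα.le hβ.le) (hB0 k).le) (hW0 k).le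
    have w1 : 0 ≤ (β - α * β * nrm k ^ (2 * s₂) / W k) * ‖g k‖ ^ 2 :=
      mul_nonneg (by linarith) (sq_nonneg _)
    have w2 : 0 ≤ (α * β * nrm k ^ (2 * s₂) / W k) *
        ((1 - α * β * (nrm k ^ (2 * s₂) / nrm k ^ (2 * s₁)) / W k) * ‖g k‖ ^ 2) :=
      mul_nonneg hEnn (mul_nonneg (by linarith) (sq_nonneg _))
    have w3 : nrm k ^ (2 * s₁) * (α * β * (nrm k ^ (2 * s₂) / nrm k ^ (2 * s₁)) / W k) *
        ((α * β * (nrm k ^ (2 * s₂) / nrm k ^ (2 * s₁)) / W k) * ‖g k‖ ^ 2)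
        = (α * β * nrm k ^ (2 * s₂) / W k) *
          ((α * β * (nrm k ^ (2 * s₂) / nrm k ^ (2 * s₁)) / W k) * ‖g k‖ ^ 2) := by
      rw [hAc]
    nlinarith [w1, w2, w3]
  -- general summability facts
  have hbsum : ∀ v : K d → ℂ, MemL2 v →
      Summable fun k : K d => nrm k ^ (2 * s₂) * ‖v k‖ ^ 2 := by
    intro v hvm
    refine Summable.of_nonneg_of_le
      (fun k => mul_nonneg (hB0 k).le (sq_nonneg _)) (fun k => ?_) hvm
    nlinarith [hB1 k, hB0 k, sq_nonneg (‖v k‖)]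
  have haddsum : ∀ u v : K d → ℂ, MemL2 u → MemL2 v →
      Summable fun k : K d => ‖u k + v k - g k‖ ^ 2 := by
    intro u v hum hvm
    refine Summable.of_nonneg_of_le (fun k => sq_nonneg _)
      (fun k => ?_) (((hum.add hvm).add hg).mul_left 3)
    have h1 : ‖u k + v k - g k‖ ≤ ‖u k‖ + ‖v k‖ + ‖g k‖ :=
      le_trans (norm_sub_le _ _) (by gcongr; exact norm_add_le _ _)
    have h0 : 0 ≤ ‖u k + v k - g k‖ := norm_nonneg _
    show ‖u k + v k - g k‖ ^ 2 ≤ 3 * (‖u k‖ ^ 2 + ‖v k‖ ^ 2 + ‖g k‖ ^ 2)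
    nlinarith [sq_nonneg (‖u k‖ - ‖v k‖), sq_nonneg (‖v k‖ - ‖g k‖), sq_nonneg (‖u k‖ - ‖g k‖),
      norm_nonneg (u k), norm_nonneg (v k), norm_nonneg (g k)]
  -- the pointwise energy
  set f : (K d → ℂ) → (K d → ℂ) → K d → ℝ := fun u v k =>
    1 / 2 * (nrm k ^ (2 * s₁) * ‖u k‖ ^ 2) + α / 2 * ‖u k + v k - g k‖ ^ 2 +
      β / 2 * (nrm k ^ (2 * s₂) * ‖v k‖ ^ 2)
    with hfdef
  have hfsum : ∀ u v : K d → ℂ, MemL2 u → MemHs s₁ u → MemL2 v → Summable (f u v) := by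
    intro u v hum huhs hvm
    exact ((huhs.mul_left (1/2)).add ((haddsum u v hum hvm).mul_left (α/2))).add
      ((hbsum v hvm).mul_left (β/2))
  have hIf : ∀ u v : K d → ℂ, MemL2 u → MemHs s₁ u → MemL2 v →
      I u v = ∑' k, f u v k := by
    intro u v hum huhs hvm
    rw [hI, HnormSq, HnormSq, ← tsum_mul_left, ← tsum_mul_left, ← tsum_mul_left,
      ← Summable.tsum_add (huhs.mul_left (1/2)) ((haddsum u v hum hvm).mul_left (α/2)),
      ← Summable.tsum_add ((huhs.mul_left (1/2)).add ((haddsum u v hum hvm).mul_left (α/2)))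
        ((hbsum v hvm).mul_left (β/2))]
  -- the pointwise error term
  set Q : (K d → ℂ) → (K d → ℂ) → K d → ℝ := fun u v k =>
    1 / 2 * (nrm k ^ (2 * s₁) * ‖u k - ustar k‖ ^ 2) +
      α / 2 * ‖(u k - ustar k) + (v k - vstar k)‖ ^ 2 +
      β / 2 * (nrm k ^ (2 * s₂) * ‖v k - vstar k‖ ^ 2)
    with hQdef
  have hQnn : ∀ (u v : K d → ℂ) (k : K d), 0 ≤ Q u v k := by
    intro u v k
    have h1 := (hA0 k).le
    have h2 := (hB0 k).le
    simp only [hQdef]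
    positivity
  have hkey : ∀ (u v : K d → ℂ) (k : K d), f u v k = f ustar vstar k + Q u v k := by
    intro u v k
    exact quad_key (nrm k ^ (2 * s₁)) (nrm k ^ (2 * s₂)) α β (W k) (hA0 k) hα hβ (hB0 k) rfl
      (g k) (u k) (v k) (ustar k) (vstar k) (hu' k) (hv' k)
  have hQsum : ∀ u v : K d → ℂ, MemL2 u → MemHs s₁ u → MemL2 v → Summable (Q u v) := by
    intro u v hum huhs hvm
    refine ((hfsum u v hum huhs hvm).sub (hfsum ustar vstar huL2 huHs hvL2)).congr fun k => ?_
    have := hkey u v k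
    linarith
  have hsplit : ∀ u v : K d → ℂ, MemL2 u → MemHs s₁ u → MemL2 v →
      I u v = I ustar vstar + ∑' k, Q u v k := by
    intro u v hum huhs hvm
    rw [hIf u v hum huhs hvm, hIf ustar vstar huL2 huHs hvL2,
      ← Summable.tsum_add (hfsum ustar vstar huL2 huHs hvL2) (hQsum u v hum huhs hvm)]
    exact tsum_congr fun k => hkey u v k
  refine ⟨huL2, huHs, hvL2, ?_, ?_, ?_⟩
  · -- relation between ustar and vstar
    intro k
    rw [hu k, hv k, hBA k]
    push_cast
    ring
  · -- minimality
    intro u v hum huhs hvm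
    rw [hsplit u v hum huhs hvm]
    have : 0 ≤ ∑' k, Q u v k := tsum_nonneg (hQnn u v)
    linarith
  · -- uniqueness
    intro u v hum huhs hvm heq
    rw [hsplit u v hum huhs hvm] at heq
    have hQ0 : ∑' k, Q u v k = 0 := by linarith
    have hQk : ∀ k, Q u v k = 0 := by
      intro k
      have hle := Summable.le_tsum (hQsum u v hum huhs hvm) k (fun j _ => hQnn u v j)
      have hge := hQnn u v k
      rw [hQ0] at hle
      linarith
    have hterms : ∀ k : K d, ‖u k - ustar k‖ ^ 2 = 0 ∧ ‖v k - vstar k‖ ^ 2 = 0 := by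
      intro k
      have h := hQk k
      simp only [hQdef] at h
      have p1 : 0 ≤ 1 / 2 * (nrm k ^ (2 * s₁) * ‖u k - ustar k‖ ^ 2) :=
        mul_nonneg (by norm_num) (mul_nonneg (hA0 k).le (sq_nonneg _))
      have p2 : 0 ≤ α / 2 * ‖(u k - ustar k) + (v k - vstar k)‖ ^ 2 :=
        mul_nonneg (by positivity) (sq_nonneg _)
      have p3 : 0 ≤ β / 2 * (nrm k ^ (2 * s₂) * ‖v k - vstar k‖ ^ 2) :=
        mul_nonneg (by positivity) (mul_nonneg (hB0 k).le (sq_nonneg _))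
      have h1 : nrm k ^ (2 * s₁) * ‖u k - ustar k‖ ^ 2 = 0 := by linarith
      have h3' : β / 2 * (nrm k ^ (2 * s₂) * ‖v k - vstar k‖ ^ 2) = 0 := by linarith
      have h3 : nrm k ^ (2 * s₂) * ‖v k - vstar k‖ ^ 2 = 0 := by
        rcases mul_eq_zero.1 h3' with h' | h'
        · exact absurd h' (by positivity : (0:ℝ) < β / 2).ne'
        · exact h'
      constructor
      · rcases mul_eq_zero.1 h1 with h' | h'
        · exact absurd h' (hA0 k).ne'
        · exact h'
      · rcases mul_eq_zero.1 h3 with h' | h'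
        · exact absurd h' (hB0 k).ne'
        · exact h'
    constructor
    · funext k
      have := sq_eq_zero_iff.mp (hterms k).1
      rw [norm_eq_zero, sub_eq_zero] at this
      exact this
    · funext k
      have := sq_eq_zero_iff.mp (hterms k).2
      rw [norm_eq_zero, sub_eq_zero] at this
      exact this
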